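/- Let n ≥ 1, let u₁,…,uₙ, v₁,…,vₙ ∈ ℝ³ be arbitrary vectors, and let Oₙ := (1/√n) Σᵢ₌₁ⁿ (uᵢ·σ) ⊗ (vᵢ·σ). For α ∈ ℝ let ψ_α := cos α • e₍₀,₀₎ + sin α • e₍₁,₁₎ ∈ ℂ^(Fin 2 × Fin 2), and let φ₊ := (e₍₀,₀₎ + e₍₁,₁₎)/√2 and φ₋ := (e₍₀,₀₎ − e₍₁,₁₎)/√2. Then for every α ∈ ℝ, |⟨ψ_α, Oₙ ψ_α⟩| ≤ max(|⟨φ₊, Oₙ φ₊⟩|, |⟨φ₋, Oₙ φ₋⟩|). -/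

import Mathlib

open Matrix Kronecker Complex

/-- The Pauli matrix σ₁. -/
noncomputable def σ1 : Matrix (Fin 2) (Fin 2) ℂ := !![0, 1; 1, 0]

/-- The Pauli matrix σ₂. -/
noncomputable def σ2 : Matrix (Fin 2) (Fin 2) ℂ := !![0, -Complex.I; Complex.I, 0]

/-- The Pauli matrix σ₃. -/
noncomputable def σ3 : Matrix (Fin 2) (Fin 2) ℂ := !![1, 0; 0, -1]

/-- For `a ∈ ℝ³`, the observable `a·σ = a₁σ₁ + a₂σ₂ + a₃σ₃`. -/
noncomputable def pauliDot (a : Fin 3 → ℝ) : Matrix (Fin 2) (Fin 2) ℂ :=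
  (a 0 : ℂ) • σ1 + (a 1 : ℂ) • σ2 + (a 2 : ℂ) • σ3

/-- The pure two-qubit state `ψ_α = cos α |00⟩ + sin α |11⟩` in Schmidt form. -/
noncomputable def schmidtState (α : ℝ) : (Fin 2 × Fin 2) → ℂ :=
  Real.cos α • (Pi.single ((0 : Fin 2), (0 : Fin 2)) (1 : ℂ) : (Fin 2 × Fin 2) → ℂ)
    + Real.sin α • (Pi.single ((1 : Fin 2), (1 : Fin 2)) (1 : ℂ) : (Fin 2 × Fin 2) → ℂ)

lemma single_quad_aux (a b : Fin 3 → ℝ) (c s : ℝ) :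
    star (c • (Pi.single ((0 : Fin 2), (0 : Fin 2)) (1 : ℂ) : (Fin 2 × Fin 2) → ℂ)
        + s • (Pi.single ((1 : Fin 2), (1 : Fin 2)) (1 : ℂ) : (Fin 2 × Fin 2) → ℂ)) ⬝ᵥ
      ((pauliDot a ⊗ₖ pauliDot b).mulVec
        (c • (Pi.single ((0 : Fin 2), (0 : Fin 2)) (1 : ℂ) : (Fin 2 × Fin 2) → ℂ)
        + s • (Pi.single ((1 : Fin 2), (1 : Fin 2)) (1 : ℂ) : (Fin 2 × Fin 2) → ℂ)))
    = (((c^2 + s^2) * (a 2 * b 2) + 2*c*s*(a 0 * b 0 - a 1 * b 1) : ℝ) : ℂ) := by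
  simp [dotProduct, Matrix.mulVec, Fintype.sum_prod_type, Fin.sum_univ_two,
    Matrix.kroneckerMap_apply, pauliDot, σ1, σ2, σ3, Pi.single_apply, Pi.smul_apply,
    smul_eq_mul, Complex.real_smul]
  ring_nf
  rw [Complex.I_sq]; ring

lemma sum_push_aux {n : ℕ} (M : Fin n → Matrix (Fin 2 × Fin 2) (Fin 2 × Fin 2) ℂ)
    (x y : (Fin 2 × Fin 2) → ℂ) :
    star x ⬝ᵥ (∑ i, M i) *ᵥ y = ∑ i, star x ⬝ᵥ (M i *ᵥ y) := by
  simp only [Matrix.mulVec, dotProduct, Matrix.sum_apply, Finset.sum_mul,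
    Finset.mul_sum]
  rw [Finset.sum_comm (γ := Fin n)]
  exact Finset.sum_congr rfl fun a _ => Finset.sum_comm

lemma quad_aux (n : ℕ) (u v : Fin n → Fin 3 → ℝ) (k c s : ℝ)
    (ψ : (Fin 2 × Fin 2) → ℂ)
    (hψ : ψ = c • (Pi.single ((0 : Fin 2), (0 : Fin 2)) (1 : ℂ) : (Fin 2 × Fin 2) → ℂ)
        + s • (Pi.single ((1 : Fin 2), (1 : Fin 2)) (1 : ℂ) : (Fin 2 × Fin 2) → ℂ)) :
    star ψ ⬝ᵥ ((((k : ℝ) : ℂ) • ∑ i, pauliDot (u i) ⊗ₖ pauliDot (v i)).mulVec ψ)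
    = ((k * ((c^2 + s^2) * (∑ i, u i 2 * v i 2)
        + 2*c*s*(∑ i, (u i 0 * v i 0 - u i 1 * v i 1))) : ℝ) : ℂ) := by
  subst hψ
  rw [Matrix.smul_mulVec, dotProduct_smul, sum_push_aux]
  simp only [single_quad_aux]
  rw [← Complex.ofReal_sum, Finset.sum_add_distrib, ← Finset.mul_sum, ← Finset.mul_sum]
  simp only [smul_eq_mul]
  push_cast
  ring

lemma interval_abs_aux (X Y t : ℝ) (h : |t| ≤ 1) : |X + t*Y| ≤ max |X+Y| |X-Y| := by
  obtain ⟨h1, h2⟩ := abs_le.mp h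
  rw [abs_le]
  constructor <;>
    nlinarith [le_max_left |X+Y| |X-Y|, le_max_right |X+Y| |X-Y|,
      le_abs_self (X+Y), neg_abs_le (X+Y), le_abs_self (X-Y), neg_abs_le (X-Y)]

/-- The magnitude of the expectation of the `n`-settings linear steering operator in any Schmidt
state `ψ_α` is bounded by its magnitude in one of the two maximally entangled states
`φ₊ = (|00⟩ + |11⟩)/√2` and `φ₋ = (|00⟩ − |11⟩)/√2`. -/
theorem schmidt_expectation_bounded_by_max_entangled (n : ℕ) (hn : 1 ≤ n)
    (u v : Fin n → Fin 3 → ℝ)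
    (On : Matrix (Fin 2 × Fin 2) (Fin 2 × Fin 2) ℂ)
    (hOn : On = ((1 / Real.sqrt n : ℝ) : ℂ) • ∑ i, pauliDot (u i) ⊗ₖ pauliDot (v i))
    (φp φm : (Fin 2 × Fin 2) → ℂ)
    (hφp : φp = (Real.sqrt 2)⁻¹ •
      ((Pi.single ((0 : Fin 2), (0 : Fin 2)) (1 : ℂ) : (Fin 2 × Fin 2) → ℂ)
        + (Pi.single ((1 : Fin 2), (1 : Fin 2)) (1 : ℂ) : (Fin 2 × Fin 2) → ℂ)))
    (hφm : φm = (Real.sqrt 2)⁻¹ •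
      ((Pi.single ((0 : Fin 2), (0 : Fin 2)) (1 : ℂ) : (Fin 2 × Fin 2) → ℂ)
        - (Pi.single ((1 : Fin 2), (1 : Fin 2)) (1 : ℂ) : (Fin 2 × Fin 2) → ℂ))) :
    ∀ α : ℝ, ‖star (schmidtState α) ⬝ᵥ (On.mulVec (schmidtState α))‖
      ≤ max ‖star φp ⬝ᵥ (On.mulVec φp)‖
          ‖star φm ⬝ᵥ (On.mulVec φm)‖ := by
  intro α
  set k : ℝ := 1 / Real.sqrt n with hk
  set X : ℝ := ∑ i, u i 2 * v i 2 with hX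
  set Y : ℝ := ∑ i, (u i 0 * v i 0 - u i 1 * v i 1) with hY
  set w : ℝ := (Real.sqrt 2)⁻¹ with hwdef
  have hw : w^2 = 1/2 := by
    rw [hwdef, inv_pow, Real.sq_sqrt (by norm_num : (2:ℝ) ≥ 0)]; norm_num
  have h1 := quad_aux n u v k (Real.cos α) (Real.sin α) (schmidtState α) rfl
  have h2 := quad_aux n u v k w w φp (by rw [hφp, smul_add])
  have h3 := quad_aux n u v k w (-w) φm (by
    rw [hφm, smul_sub, sub_eq_add_neg, ← neg_smul])
  rw [hOn, h1, h2, h3]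
  simp only [Complex.norm_real, Real.norm_eq_abs]
  have e1 : k * ((Real.cos α ^ 2 + Real.sin α ^ 2) * X + 2 * Real.cos α * Real.sin α * Y)
      = k*X + Real.sin (2*α) * (k*Y) := by
    rw [Real.cos_sq_add_sin_sq, Real.sin_two_mul]; ring
  have e2 : k * ((w^2 + w^2) * X + 2*w*w*Y) = k*X + k*Y := by
    linear_combination (2*k*(X+Y)) * hw
  have e3 : k * ((w^2 + (-w)^2) * X + 2*w*(-w)*Y) = k*X - k*Y := by
    linear_combination (2*k*(X-Y)) * hw
  rw [e1, e2, e3]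
  exact interval_abs_aux (k*X) (k*Y) (Real.sin (2*α))
    (abs_le.mpr ⟨Real.neg_one_le_sin _, Real.sin_le_one _⟩)
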